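/- The function f(t,x) = exp((-t³ + t)x) satisfies the operator identity (−27x²∂_x² − 27x∂_x + 4x² + 3)·f = ∂_t( (−9tx∂_x + (−6t² + 4)x + 3t)·f ). -/

import Mathlib

/-- `f(t,x) = exp((-t³ + t)x)` -/
noncomputable def f17 (t x : ℝ) : ℝ := Real.exp ((-t ^ 3 + t) * x)
noncomputable def f17x (t x : ℝ) : ℝ := deriv (fun y => f17 t y) x
noncomputable def f17xx (t x : ℝ) : ℝ := deriv (fun y => f17x t y) x

lemma f17x_eq (t x : ℝ) : f17x t x = (-t ^ 3 + t) * f17 t x := by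
  have h : HasDerivAt (fun y => f17 t y) ((-t ^ 3 + t) * Real.exp ((-t ^ 3 + t) * x)) x := by
    have := (((hasDerivAt_id x).const_mul (-t ^ 3 + t)).exp)
    simp only [id_eq] at this
    simp only [f17]
    convert this using 1
    ring
  rw [f17x, h.deriv, f17]

lemma f17xx_eq (t x : ℝ) : f17xx t x = (-t ^ 3 + t) ^ 2 * f17 t x := by
  have h : HasDerivAt (fun y => f17x t y)
      ((-t ^ 3 + t) * ((-t ^ 3 + t) * Real.exp ((-t ^ 3 + t) * x))) x := by
    have h2 : HasDerivAt (fun y => (-t ^ 3 + t) * Real.exp ((-t ^ 3 + t) * y))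
        ((-t ^ 3 + t) * ((-t ^ 3 + t) * Real.exp ((-t ^ 3 + t) * x))) x := by
      have := ((((hasDerivAt_id x).const_mul (-t ^ 3 + t)).exp).const_mul (-t ^ 3 + t))
      simp only [id_eq] at this
      exact this.congr_deriv (by ring)
    exact h2.congr_of_eventuallyEq (Filter.Eventually.of_forall fun y => f17x_eq t y)
  rw [f17xx, h.deriv, f17]; ring

theorem stmt17 (t x : ℝ) :
    -27 * x ^ 2 * f17xx t x - 27 * x * f17x t x + (4 * x ^ 2 + 3) * f17 t x
      = deriv (fun s => -9 * s * x * f17x s x + ((-6 * s ^ 2 + 4) * x + 3 * s) * f17 s x) t := by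
  have hg : ∀ s : ℝ, -9 * s * x * f17x s x + ((-6 * s ^ 2 + 4) * x + 3 * s) * f17 s x
      = (9 * s ^ 4 * x - 15 * s ^ 2 * x + 4 * x + 3 * s) * Real.exp ((-s ^ 3 + s) * x) := by
    intro s; rw [f17x_eq, f17]; ring
  have ha : ∀ s : ℝ, HasDerivAt (fun u : ℝ => (-u ^ 3 + u) * x)
      ((-3 * s ^ 2 + 1) * x) s := by
    intro s
    have : HasDerivAt (fun u : ℝ => -u ^ 3 + u) (-3 * s ^ 2 + 1) s := by
      have h1 : HasDerivAt (fun u : ℝ => u ^ 3) (3 * s ^ 2) s := by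
        simpa using hasDerivAt_pow 3 s
      exact (h1.neg.add (hasDerivAt_id' s)).congr_deriv (by ring)
    simpa using this.mul_const x
  have hE : HasDerivAt (fun s : ℝ => Real.exp ((-s ^ 3 + s) * x))
      ((-3 * t ^ 2 + 1) * x * Real.exp ((-t ^ 3 + t) * x)) t := by
    simpa [mul_comm] using (ha t).exp
  have hP : HasDerivAt (fun s : ℝ => 9 * s ^ 4 * x - 15 * s ^ 2 * x + 4 * x + 3 * s)
      (36 * t ^ 3 * x - 30 * t * x + 3) t := by
    have h4 : HasDerivAt (fun s : ℝ => s ^ 4) (4 * t ^ 3) t := by simpa using hasDerivAt_pow 4 t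
    have h2 : HasDerivAt (fun s : ℝ => s ^ 2) (2 * t) t := by simpa using hasDerivAt_pow 2 t
    have := ((((h4.const_mul 9).mul_const x).sub ((h2.const_mul 15).mul_const x)).add_const
        (4 * x)).add ((hasDerivAt_id t).const_mul 3)
    exact this.congr_deriv (by ring)
  have hD : HasDerivAt (fun s : ℝ =>
      (9 * s ^ 4 * x - 15 * s ^ 2 * x + 4 * x + 3 * s) * Real.exp ((-s ^ 3 + s) * x))
      ((36 * t ^ 3 * x - 30 * t * x + 3) * Real.exp ((-t ^ 3 + t) * x)
        + (9 * t ^ 4 * x - 15 * t ^ 2 * x + 4 * x + 3 * t) *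
          ((-3 * t ^ 2 + 1) * x * Real.exp ((-t ^ 3 + t) * x))) t := hP.mul hE
  have hD' : HasDerivAt (fun s => -9 * s * x * f17x s x + ((-6 * s ^ 2 + 4) * x + 3 * s) * f17 s x)
      ((36 * t ^ 3 * x - 30 * t * x + 3) * Real.exp ((-t ^ 3 + t) * x)
        + (9 * t ^ 4 * x - 15 * t ^ 2 * x + 4 * x + 3 * t) *
          ((-3 * t ^ 2 + 1) * x * Real.exp ((-t ^ 3 + t) * x))) t :=
    hD.congr_of_eventuallyEq (Filter.Eventually.of_forall fun s => (hg s))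
  rw [hD'.deriv, f17xx_eq, f17x_eq, f17]
  ring
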